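/- Let M ≥ 2, A ⊂ {0,…,M−1} with 1 ≤ |A| ≤ M, δ = log|A|/log M, M^k ≤ N < M^{k+1} with N ∈ Mℤ, and C_k(N) := {⌈jN/M^k⌉ : j ∈ C_k} ⊂ ℤ_N, where C_k is the discrete Cantor set of base M with alphabet A. Then C_k(N) is δ-regular with constant 8M^{3δ}: for every interval J with |J| ≥ 1, #(C_k(N) ∩ J) ≤ 8M^{3δ}|J|^δ, and for every interval J with 1 ≤ |J| ≤ N centered at a point of C_k(N), #(C_k(N) ∩ J) ≥ (8M^{3δ})^{-1}|J|^δ. -/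

import Mathlib

open Finset

/-- The discrete Cantor set `C_k = {∑ a_j M^j : a_j ∈ A}`. -/
def Cantor (M : ℕ) (A : Finset ℕ) (k : ℕ) : Set ℤ :=
  {m | ∃ a : Fin k → ℕ, (∀ j, a j ∈ A) ∧ m = ∑ j, (a j : ℤ) * (M : ℤ) ^ (j : ℕ)}

/-- The dilated Cantor set `C_k(N) = {⌈jN/M^k⌉ : j ∈ C_k}`. -/
def CantorN (M : ℕ) (A : Finset ℕ) (k N : ℕ) : Set ℤ :=
  {b | ∃ j ∈ Cantor M A k, b = ⌈(j * N : ℚ) / (M : ℚ) ^ k⌉}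


def valN (M : ℕ) (a : ℕ → ℕ) (k : ℕ) : ℕ := ∑ j ∈ Finset.range k, a j * M ^ j

lemma valN_lt (M : ℕ) (a : ℕ → ℕ) (k : ℕ) (h : ∀ j < k, a j < M) (hM : 1 ≤ M) :
    valN M a k + 1 ≤ M ^ k := by
  induction k with
  | zero => simp [valN]
  | succ k ih =>
    have ih' := ih (fun j hj => h j (hj.trans (Nat.lt_succ_self k)))
    have hk : a k + 1 ≤ M := h k (Nat.lt_succ_self k)
    have : valN M a (k+1) = valN M a k + a k * M ^ k := Finset.sum_range_succ _ k
    rw [this]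
    calc valN M a k + a k * M ^ k + 1 = (valN M a k + 1) + a k * M ^ k := by ring
      _ ≤ M ^ k + a k * M ^ k := by omega
      _ = (a k + 1) * M ^ k := by ring
      _ ≤ M * M ^ k := Nat.mul_le_mul_right _ hk
      _ = M ^ (k+1) := by ring

lemma valN_split (M : ℕ) (a : ℕ → ℕ) {m k : ℕ} (h : m ≤ k) :
    valN M a k = valN M a m + M ^ m * valN M (fun j => a (m + j)) (k - m) := by
  obtain ⟨t, rfl⟩ := Nat.exists_eq_add_of_le h
  unfold valN
  rw [Finset.sum_range_add, Nat.add_sub_cancel_left, Finset.mul_sum]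
  congr 1
  apply Finset.sum_congr rfl
  intro j _
  rw [pow_add]; ring

lemma valN_div (M : ℕ) (a : ℕ → ℕ) {m k : ℕ} (h : m ≤ k) (hM : 1 ≤ M)
    (hd : ∀ j < k, a j < M) :
    valN M a k / M ^ m = valN M (fun j => a (m + j)) (k - m) := by
  rw [valN_split M a h, Nat.add_mul_div_left _ _ (pow_pos (by omega : 0 < M) m),
    Nat.div_eq_of_lt (by have := valN_lt M a m (fun j hj => hd j (hj.trans_le h)) hM; omega)]
  omega

lemma valN_digit (M : ℕ) (a : ℕ → ℕ) {i k : ℕ} (h : i < k) (hM : 1 ≤ M)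
    (hd : ∀ j < k, a j < M) :
    valN M a k / M ^ i % M = a i := by
  rw [valN_div M a h.le hM hd]
  have h1 : 1 ≤ k - i := by omega
  rw [valN_split M _ h1]
  have : valN M (fun j => a (i + j)) 1 = a i := by simp [valN]
  rw [this, pow_one]
  rw [Nat.add_mul_mod_self_left, Nat.mod_eq_of_lt (hd i h)]

lemma valN_mod (M : ℕ) (a : ℕ → ℕ) {m k : ℕ} (h : m ≤ k) (hM : 1 ≤ M)
    (hd : ∀ j < k, a j < M) :
    valN M a k % M ^ m = valN M a m := by
  rw [valN_split M a h, Nat.add_mul_mod_self_left,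
    Nat.mod_eq_of_lt (by have := valN_lt M a m (fun j hj => hd j (hj.trans_le h)) hM; omega)]
section
variable {M N k : ℕ}

noncomputable def fdil (M N k : ℕ) (j : ℤ) : ℤ := ⌈(j * N : ℚ) / (M : ℚ) ^ k⌉

def extf (k : ℕ) (a : Fin k → ℕ) : ℕ → ℕ := fun j => if h : j < k then a ⟨j, h⟩ else 0

def fval (M k : ℕ) (a : Fin k → ℕ) : ℕ := ∑ j ∈ Finset.range k, extf k a j * M ^ j

lemma fvalZ_eq (a : Fin k → ℕ) :
    ((fval M k a : ℤ)) = ∑ j : Fin k, (a j : ℤ) * (M : ℤ) ^ (j : ℕ) := by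
  rw [fval]
  push_cast
  rw [← Fin.sum_univ_eq_sum_range (fun j => (extf k a j : ℤ) * (M:ℤ) ^ j) k]
  apply Finset.sum_congr rfl
  intro j _
  congr 2
  simp [extf, j.2]

lemma fdil_mono (hM : 1 ≤ M) (hN : M ^ k ≤ N) {j₁ j₂ : ℤ} (h : j₁ < j₂) :
    fdil M N k j₁ < fdil M N k j₂ := by
  have hMk : (0:ℚ) < (M:ℚ) ^ k := by positivity
  have hq : (1:ℚ) ≤ (N:ℚ) / (M:ℚ) ^ k := by
    rw [one_le_div hMk]
    exact_mod_cast hN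
  have hd : (1:ℚ) ≤ ((j₂ - j₁ : ℤ) : ℚ) := by exact_mod_cast (by omega : (1:ℤ) ≤ j₂ - j₁)
  have hx : (j₁ * N : ℚ) / (M:ℚ) ^ k + 1 ≤ (j₂ * N : ℚ) / (M:ℚ) ^ k := by
    have : (j₂ * N : ℚ) / (M:ℚ) ^ k
        = (j₁ * N : ℚ) / (M:ℚ) ^ k + ((j₂ - j₁ : ℤ) : ℚ) * ((N:ℚ) / (M:ℚ) ^ k) := by
      field_simp
      push_cast; ring
    rw [this]
    nlinarith
  have := Int.ceil_le_ceil hx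
  rw [Int.ceil_add_one] at this
  unfold fdil
  omega

lemma fdil_dist (hM : 1 ≤ M) (hN : N ≤ M ^ (k + 1)) {j₁ j₂ D : ℤ} (hD : 0 ≤ D)
    (h : j₁ - j₂ ≤ D) : fdil M N k j₁ - fdil M N k j₂ ≤ D * M := by
  have hMk : (0:ℚ) < (M:ℚ) ^ k := by positivity
  have hq : (N:ℚ) / (M:ℚ) ^ k ≤ (M:ℚ) := by
    rw [div_le_iff₀ hMk]
    rw [← pow_succ']
    exact_mod_cast hN
  have hq0 : (0:ℚ) ≤ (N:ℚ) / (M:ℚ) ^ k := by positivity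
  have hx : (j₁ * N : ℚ) / (M:ℚ) ^ k
      = (j₂ * N : ℚ) / (M:ℚ) ^ k + ((j₁ - j₂ : ℤ) : ℚ) * ((N:ℚ) / (M:ℚ) ^ k) := by
    field_simp; push_cast; ring
  have hd : ((j₁ - j₂ : ℤ) : ℚ) ≤ (D:ℚ) := by exact_mod_cast h
  have hD' : (0:ℚ) ≤ (D:ℚ) := by exact_mod_cast hD
  have h2 : ((j₁ - j₂ : ℤ) : ℚ) * ((N:ℚ) / (M:ℚ) ^ k) ≤ ((D * M : ℤ) : ℚ) := by
    push_cast
    calc ((j₁:ℚ) - j₂) * ((N:ℚ) / (M:ℚ) ^ k) ≤ (D:ℚ) * ((N:ℚ) / (M:ℚ) ^ k) := by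
          apply mul_le_mul_of_nonneg_right _ hq0
          push_cast at hd; linarith
      _ ≤ (D:ℚ) * (M:ℚ) := mul_le_mul_of_nonneg_left hq hD'
  have := Int.ceil_add_le ((j₂ * N : ℚ) / (M:ℚ) ^ k) (((j₁ - j₂ : ℤ) : ℚ) * ((N:ℚ) / (M:ℚ) ^ k))
  unfold fdil
  rw [hx]
  have h3 : ⌈((j₁ - j₂ : ℤ) : ℚ) * ((N:ℚ) / (M:ℚ) ^ k)⌉ ≤ D * M := by
    calc ⌈((j₁ - j₂ : ℤ) : ℚ) * ((N:ℚ) / (M:ℚ) ^ k)⌉ ≤ ⌈((D * M : ℤ) : ℚ)⌉ := Int.ceil_le_ceil h2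
      _ = D * M := Int.ceil_intCast _
  omega
end

open scoped Classical

lemma fval_inj {M k : ℕ} (hM : 1 ≤ M) {a b : Fin k → ℕ}
    (ha : ∀ j, a j < M) (hb : ∀ j, b j < M) (h : fval M k a = fval M k b) : a = b := by
  have hda : ∀ j < k, extf k a j < M := by
    intro j hj; simp only [extf, dif_pos hj]; exact ha _
  have hdb : ∀ j < k, extf k b j < M := by
    intro j hj; simp only [extf, dif_pos hj]; exact hb _
  funext j
  have h1 := valN_digit M (extf k a) j.2 hM hda
  have h2 := valN_digit M (extf k b) j.2 hM hdb
  have : extf k a j = extf k b j := by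
    rw [← h1, ← h2]; unfold fval at h; unfold valN; rw [h]
  simpa [extf, j.2] using this

lemma core_upper {M : ℕ} (hM : 2 ≤ M) {A : Finset ℕ} (hAM : ∀ a ∈ A, a < M)
    {k m : ℕ} (hm : m ≤ k) (c d : ℝ) (hlen : d ≤ c + (M:ℝ) ^ m) :
    ((Fintype.piFinset (fun _ : Fin k => A)).filter
      (fun a => c ≤ (fval M k a : ℝ) ∧ (fval M k a : ℝ) ≤ d)).card ≤ 2 * A.card ^ m := by
  have hM1 : 1 ≤ M := by omega
  have hMm : (0:ℕ) < M ^ m := pow_pos (by omega : 0 < M) m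
  set q : ℝ := c / (M:ℝ) ^ m with hq
  have hMmR : (0:ℝ) < (M:ℝ) ^ m := by positivity
  have key := Finset.card_le_card_of_injOn
    (f := fun a : Fin k → ℕ => ((fun i : Fin m => a ⟨i, lt_of_lt_of_le i.2 hm⟩),
      ((fval M k a / M ^ m : ℕ) : ℤ)))
    (s := (Fintype.piFinset (fun _ : Fin k => A)).filter
      (fun a => c ≤ (fval M k a : ℝ) ∧ (fval M k a : ℝ) ≤ d))
    (t := (Fintype.piFinset (fun _ : Fin m => A)) ×ˢ ({⌊q⌋, ⌊q⌋ + 1} : Finset ℤ))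
    ?_ ?_
  · calc _ ≤ _ := key
      _ = (Fintype.piFinset (fun _ : Fin m => A)).card * ({⌊q⌋, ⌊q⌋ + 1} : Finset ℤ).card :=
        Finset.card_product _ _
      _ ≤ A.card ^ m * 2 := by
        apply Nat.mul_le_mul
        · rw [Fintype.card_piFinset]; simp
        · apply le_trans (Finset.card_insert_le _ _); simp
      _ = 2 * A.card ^ m := by ring
  · -- maps into
    intro a ha
    simp only [Finset.coe_filter, Set.mem_setOf_eq] at ha
    obtain ⟨hmem, hc, hd⟩ := ha
    rw [Fintype.mem_piFinset] at hmem
    refine Finset.mem_product.mpr ⟨?_, ?_⟩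
    · rw [Fintype.mem_piFinset]; intro i; exact hmem _
    · set v := fval M k a with hv
      set t := v / M ^ m with ht
      have h1 : t * M ^ m ≤ v := Nat.div_mul_le_self v (M ^ m)
      have h2 : v < (t + 1) * M ^ m := by
        have h := Nat.div_add_mod v (M ^ m)
        have hr := Nat.mod_lt v hMm
        calc v = M ^ m * t + v % M ^ m := h.symm
          _ < M ^ m * t + M ^ m := by omega
          _ = (t + 1) * M ^ m := by ring
      have h1R : (t:ℝ) * (M:ℝ) ^ m ≤ (v:ℝ) := by exact_mod_cast h1
      have h2R : (v:ℝ) < ((t:ℝ) + 1) * (M:ℝ) ^ m := by exact_mod_cast h2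
      have hub : (t:ℤ) ≤ ⌊q⌋ + 1 := by
        have : (t:ℝ) ≤ q + 1 := by
          rw [hq, div_add' _ _ _ (ne_of_gt hMmR)]
          rw [le_div_iff₀ hMmR]
          nlinarith
        have : ((t:ℤ):ℝ) ≤ q + 1 := by exact_mod_cast this
        have := Int.le_floor.mpr this
        rwa [Int.floor_add_one] at this
      have hlb : ⌊q⌋ ≤ (t:ℤ) := by
        have hq2 : q < ((t:ℤ):ℝ) + 1 := by
          rw [hq, div_lt_iff₀ hMmR]
          push_cast
          nlinarith
        have := Int.floor_lt.mpr (by exact_mod_cast hq2 : q < (((t:ℤ) + 1 : ℤ):ℝ))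
        omega
      simp only [Finset.mem_insert, Finset.mem_singleton]
      rw [show fval M k a / M ^ m = t from by rw [ht, hv]]
      omega
  · -- injOn
    intro a₁ h₁ a₂ h₂ heq
    simp only [Finset.coe_filter, Set.mem_setOf_eq] at h₁ h₂
    obtain ⟨hmem₁, -⟩ := h₁
    obtain ⟨hmem₂, -⟩ := h₂
    rw [Fintype.mem_piFinset] at hmem₁ hmem₂
    have hd₁ : ∀ j, a₁ j < M := fun j => hAM _ (hmem₁ j)
    have hd₂ : ∀ j, a₂ j < M := fun j => hAM _ (hmem₂ j)
    have hdig : ∀ j < k, extf k a₁ j < M := by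
      intro j hj; simp only [extf, dif_pos hj]; exact hd₁ _
    have hdig₂ : ∀ j < k, extf k a₂ j < M := by
      intro j hj; simp only [extf, dif_pos hj]; exact hd₂ _
    have hfst := congrArg Prod.fst heq
    have hsnd := congrArg Prod.snd heq
    simp only at hfst hsnd
    have hdivEq : fval M k a₁ / M ^ m = fval M k a₂ / M ^ m := by exact_mod_cast hsnd
    have hlow : valN M (extf k a₁) m = valN M (extf k a₂) m := by
      unfold valN
      apply Finset.sum_congr rfl
      intro j hj
      rw [Finset.mem_range] at hj
      have hjk : j < k := lt_of_lt_of_le hj hm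
      have : a₁ ⟨j, hjk⟩ = a₂ ⟨j, hjk⟩ := by
        have := congrFun hfst ⟨j, hj⟩
        simpa using this
      simp [extf, dif_pos hjk, this]
    have hveq : fval M k a₁ = fval M k a₂ := by
      have m₁ : fval M k a₁ % M ^ m = valN M (extf k a₁) m := valN_mod M _ hm hM1 hdig
      have m₂ : fval M k a₂ % M ^ m = valN M (extf k a₂) m := valN_mod M _ hm hM1 hdig₂
      calc fval M k a₁ = M ^ m * (fval M k a₁ / M ^ m) + fval M k a₁ % M ^ m :=
            (Nat.div_add_mod _ _).symm
        _ = M ^ m * (fval M k a₂ / M ^ m) + fval M k a₂ % M ^ m := by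
            rw [hdivEq, m₁, hlow, ← m₂]
        _ = fval M k a₂ := Nat.div_add_mod _ _
    exact fval_inj hM1 hd₁ hd₂ hveq

lemma cantorN_eq (M : ℕ) (A : Finset ℕ) (k N : ℕ) :
    CantorN M A k N =
      ↑((Fintype.piFinset (fun _ : Fin k => A)).image
        (fun a => fdil M N k (fval M k a))) := by
  ext b
  simp only [CantorN, Cantor, Set.mem_setOf_eq, Finset.coe_image, Set.mem_image,
    Finset.mem_coe, Fintype.mem_piFinset]
  constructor
  · rintro ⟨j, ⟨a, ha, rfl⟩, rfl⟩
    exact ⟨a, ha, by rw [fdil, fvalZ_eq]⟩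
  · rintro ⟨a, ha, rfl⟩
    exact ⟨(fval M k a : ℤ), ⟨a, ha, fvalZ_eq a⟩, rfl⟩

set_option maxHeartbeats 2000000 in
theorem stmt13 (M : ℕ) (hM : 2 ≤ M) (A : Finset ℕ) (hA : A.Nonempty)
    (hAM : ∀ a ∈ A, a < M) (k : ℕ) (hk : 1 ≤ k) (N : ℕ)
    (hN₁ : M ^ k ≤ N) (hN₂ : N < M ^ (k + 1)) (hdvd : M ∣ N) (δ : ℝ)
    (hδ : δ = Real.log A.card / Real.log M) :
    (∀ c d : ℝ, 1 ≤ d - c →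
      (({m : ℤ | m ∈ CantorN M A k N ∧ (m : ℝ) ∈ Set.Icc c d}.ncard : ℝ))
        ≤ 8 * (M : ℝ) ^ (3 * δ) * (d - c) ^ δ) ∧
    (∀ j₀ ∈ CantorN M A k N, ∀ r : ℝ, 1 ≤ 2 * r → 2 * r ≤ (N : ℝ) →
      (8 * (M : ℝ) ^ (3 * δ))⁻¹ * (2 * r) ^ δ
        ≤ ({m : ℤ | m ∈ CantorN M A k N ∧
            (m : ℝ) ∈ Set.Icc ((j₀ : ℝ) - r) ((j₀ : ℝ) + r)}.ncard : ℝ)) := by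
  have hM1 : 1 ≤ M := by omega
  have hM' : 1 < M := hM
  have hMR : (1:ℝ) < (M:ℝ) := by exact_mod_cast hM'
  have hMR0 : (0:ℝ) < (M:ℝ) := by positivity
  have hcardA : 0 < A.card := Finset.card_pos.mpr hA
  have hcardAR : (1:ℝ) ≤ (A.card:ℝ) := by exact_mod_cast hcardA
  have hcardAM : A.card ≤ M := by
    have : A ⊆ Finset.range M := fun a ha => Finset.mem_range.mpr (hAM a ha)
    simpa using Finset.card_le_card this
  -- δ basics
  have hMδ : (M:ℝ) ^ δ = (A.card:ℝ) := by
    rw [hδ, ← Real.logb]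
    exact Real.rpow_logb hMR0 (by norm_num; exact_mod_cast hM'.ne') (by positivity)
  have hδ0 : 0 ≤ δ := by
    rw [hδ]
    apply div_nonneg
    · exact Real.log_nonneg hcardAR
    · exact Real.log_nonneg hMR.le
  have hδ1 : δ ≤ 1 := by
    rw [hδ, div_le_one (Real.log_pos hMR)]
    exact Real.log_le_log (by positivity) (by exact_mod_cast hcardAM)
  have hpowδ : ∀ m : ℕ, ((M:ℝ) ^ m) ^ δ = (A.card:ℝ) ^ m := by
    intro m
    rw [← Real.rpow_natCast (M:ℝ) m, ← Real.rpow_mul hMR0.le, mul_comm,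
      Real.rpow_mul hMR0.le, hMδ, Real.rpow_natCast]
  have hM3δ : (M:ℝ) ^ (3 * δ) = ((M:ℝ) ^ (3:ℕ)) ^ δ := by
    rw [← Real.rpow_natCast (M:ℝ) 3, ← Real.rpow_mul hMR0.le]
    norm_num [mul_comm]
  have hM3δpos : (0:ℝ) < (M:ℝ) ^ (3 * δ) := Real.rpow_pos_of_pos hMR0 _
  set Fk := Fintype.piFinset (fun _ : Fin k => A) with hFk
  set g : (Fin k → ℕ) → ℤ := fun a => fdil M N k (fval M k a) with hg
  set CNF : Finset ℤ := Fk.image g with hCNF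
  have hset : ∀ c d : ℝ, {x : ℤ | x ∈ CantorN M A k N ∧ (x:ℝ) ∈ Set.Icc c d}
      = ↑(CNF.filter (fun x : ℤ => c ≤ (x:ℝ) ∧ (x:ℝ) ≤ d)) := by
    intro c d
    ext x
    simp only [Set.mem_setOf_eq, cantorN_eq M A k N, Finset.coe_filter,
      Set.mem_Icc, Finset.mem_coe, hCNF]
    try tauto
  have hFkcard : Fk.card = A.card ^ k := by
    rw [hFk, Fintype.card_piFinset]; simp
  have hdigFk : ∀ a ∈ Fk, ∀ j, a j < M := by
    intro a ha j
    rw [hFk, Fintype.mem_piFinset] at ha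
    exact hAM _ (ha j)
  constructor
  · -- upper bound
    intro c d hcd
    set L : ℝ := d - c with hL
    have hL1 : 1 ≤ L := hcd
    have hL0 : 0 < L := by linarith
    rw [hset c d, Set.ncard_coe_finset]
    set n : ℕ := ⌈2 * L⌉₊ with hn
    have hn2 : 2 ≤ n := by
      by_contra h
      push_neg at h
      have h1 : n ≤ 1 := by omega
      have := Nat.ceil_le.mp h1
      push_cast at this
      linarith
    have h2Ln : 2 * L ≤ (n:ℝ) := Nat.le_ceil _
    have hn2L : (n:ℝ) < 2 * L + 1 := Nat.ceil_lt_add_one (by positivity)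
    set m₀ : ℕ := Nat.clog M n with hm₀
    have hm₀1 : 1 ≤ m₀ := Nat.clog_pos hM' (by omega)
    set m : ℕ := min m₀ k with hm
    have hNR0 : (0:ℝ) < (N:ℝ) := by
      have : 0 < N := lt_of_lt_of_le (pow_pos (by omega : 0 < M) k) hN₁
      exact_mod_cast this
    have hMkR0 : (0:ℝ) < (M:ℝ) ^ k := by positivity
    have hMkN : (M:ℝ) ^ k ≤ (N:ℝ) := by exact_mod_cast hN₁
    set c₂ : ℝ := (c - 1) * (M:ℝ) ^ k / N with hc₂
    set d₂ : ℝ := d * (M:ℝ) ^ k / N with hd₂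
    have htrans : ∀ a, c ≤ ((g a : ℤ):ℝ) → ((g a : ℤ):ℝ) ≤ d →
        c₂ ≤ (fval M k a : ℝ) ∧ (fval M k a : ℝ) ≤ d₂ := by
      intro a hac had
      set x : ℚ := ((fval M k a : ℤ) * N : ℚ) / (M:ℚ) ^ k with hx
      have hga : g a = ⌈x⌉ := rfl
      set v : ℝ := (fval M k a : ℝ) with hv
      have hxR : ((x:ℚ):ℝ) = v * N / (M:ℝ) ^ k := by
        rw [hx]; push_cast; ring
      have h1 : ((x:ℚ):ℝ) ≤ ((⌈x⌉:ℤ):ℝ) := by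
        exact_mod_cast (Int.le_ceil x)
      have h2 : ((⌈x⌉:ℤ):ℝ) < ((x:ℚ):ℝ) + 1 := by
        exact_mod_cast (Int.ceil_lt_add_one x)
      rw [hga] at hac had
      have hcx : c - 1 < v * N / (M:ℝ) ^ k := by rw [← hxR]; linarith
      have hdx : v * N / (M:ℝ) ^ k ≤ d := by rw [← hxR]; linarith
      constructor
      · rw [hc₂, div_le_iff₀ hNR0]
        have := (lt_div_iff₀ hMkR0).mp hcx
        linarith
      · rw [hd₂, le_div_iff₀ hNR0]
        have := (div_le_iff₀ hMkR0).mp hdx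
        linarith
    have hchain : (CNF.filter (fun x : ℤ => c ≤ (x:ℝ) ∧ (x:ℝ) ≤ d)).card
        ≤ (Fk.filter (fun a => c₂ ≤ (fval M k a : ℝ) ∧ (fval M k a : ℝ) ≤ d₂)).card := by
      rw [hCNF, Finset.filter_image]
      calc ((Fk.filter fun a => c ≤ ((g a : ℤ):ℝ) ∧ ((g a : ℤ):ℝ) ≤ d).image g).card
          ≤ (Fk.filter fun a => c ≤ ((g a : ℤ):ℝ) ∧ ((g a : ℤ):ℝ) ≤ d).card :=
            Finset.card_image_le
        _ ≤ _ := by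
            apply Finset.card_le_card
            intro a ha
            rw [Finset.mem_filter] at ha ⊢
            exact ⟨ha.1, htrans a ha.2.1 ha.2.2⟩
    have hlendiff : d₂ - c₂ ≤ 2 * L := by
      have he : d₂ - c₂ = (L + 1) * ((M:ℝ) ^ k / N) := by
        rw [hd₂, hc₂, hL]; field_simp; ring
      have h1 : (M:ℝ) ^ k / N ≤ 1 := by
        rw [div_le_one hNR0]; exact hMkN
      have h2 : (L + 1) * ((M:ℝ) ^ k / N) ≤ (L + 1) * 1 :=
        mul_le_mul_of_nonneg_left h1 (by linarith)
      rw [he]; nlinarith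
    have hcount : (CNF.filter (fun x : ℤ => c ≤ (x:ℝ) ∧ (x:ℝ) ≤ d)).card
        ≤ 2 * A.card ^ m := by
      rcases le_total m₀ k with hmk | hkm
      · have hmm : m = m₀ := min_eq_left hmk
        have hpow : (n:ℝ) ≤ ((M:ℝ) ^ m₀) := by
          have := Nat.le_pow_clog hM' n
          exact_mod_cast this
        have hlen : d₂ ≤ c₂ + (M:ℝ) ^ m₀ := by linarith
        rw [hmm]
        exact le_trans hchain (core_upper hM hAM hmk c₂ d₂ hlen)
      · have hmm : m = k := min_eq_right hkm
        rw [hmm]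
        calc (CNF.filter (fun x : ℤ => c ≤ (x:ℝ) ∧ (x:ℝ) ≤ d)).card
            ≤ (Fk.filter (fun a => c₂ ≤ (fval M k a : ℝ) ∧ (fval M k a : ℝ) ≤ d₂)).card :=
              hchain
          _ ≤ Fk.card := Finset.card_filter_le _ _
          _ = A.card ^ k := hFkcard
          _ ≤ 2 * A.card ^ k := by omega
    have hMm : ((M:ℝ) ^ m) ≤ (M:ℝ) ^ (3:ℕ) * L := by
      have hmono : ((M:ℝ) ^ m) ≤ (M:ℝ) ^ m₀ := by
        apply pow_le_pow_right₀ hMR.le (min_le_left _ _)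
      have hpred : (M:ℕ) ^ (m₀ - 1) < n := by
        have := Nat.pow_pred_clog_lt_self hM' (x := n) (by omega)
        simpa [Nat.pred_eq_sub_one] using this
      have hpredR : ((M:ℝ) ^ (m₀ - 1)) ≤ (n:ℝ) - 1 := by
        have : (M:ℕ) ^ (m₀ - 1) ≤ n - 1 := by omega
        have h2 : ((M ^ (m₀ - 1) : ℕ):ℝ) ≤ ((n - 1 : ℕ):ℝ) := by exact_mod_cast this
        push_cast [Nat.cast_sub (by omega : 1 ≤ n)] at h2
        push_cast
        linarith
      have hsplit : (M:ℝ) ^ m₀ = (M:ℝ) * (M:ℝ) ^ (m₀ - 1) := by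
        rw [← pow_succ']
        congr 1
        omega
      have h2L : (n:ℝ) - 1 < 2 * L := by linarith
      calc ((M:ℝ) ^ m) ≤ (M:ℝ) ^ m₀ := hmono
        _ = (M:ℝ) * (M:ℝ) ^ (m₀ - 1) := hsplit
        _ ≤ (M:ℝ) * (2 * L) := by
            apply mul_le_mul_of_nonneg_left _ hMR0.le
            linarith
        _ ≤ (M:ℝ) ^ (3:ℕ) * L := by
            have hM2 : (2:ℝ) ≤ (M:ℝ) := by exact_mod_cast hM
            have hA1 : (M:ℝ) * 2 ≤ (M:ℝ) * (M:ℝ) := mul_le_mul_of_nonneg_left hM2 hMR0.le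
            have hA2 : (M:ℝ) * ((M:ℝ) * 2) ≤ (M:ℝ) * ((M:ℝ) * (M:ℝ)) :=
              mul_le_mul_of_nonneg_left hA1 hMR0.le
            have h3 : 2 * (M:ℝ) ≤ (M:ℝ) ^ (3:ℕ) := by nlinarith [sq_nonneg (M:ℝ)]
            nlinarith [mul_le_mul_of_nonneg_right h3 (by linarith : (0:ℝ) ≤ L)]
    -- final real computation
    calc ((CNF.filter (fun x : ℤ => c ≤ (x:ℝ) ∧ (x:ℝ) ≤ d)).card : ℝ)
        ≤ 2 * (A.card:ℝ) ^ m := by exact_mod_cast hcount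
      _ = 2 * ((M:ℝ) ^ m) ^ δ := by rw [hpowδ]
      _ ≤ 2 * ((M:ℝ) ^ (3:ℕ) * L) ^ δ := by
          apply mul_le_mul_of_nonneg_left _ (by norm_num)
          exact Real.rpow_le_rpow (by positivity) hMm hδ0
      _ = 2 * (M:ℝ) ^ (3 * δ) * L ^ δ := by
          rw [Real.mul_rpow (by positivity) hL0.le, hM3δ]; ring
      _ ≤ 8 * (M:ℝ) ^ (3 * δ) * L ^ δ := by
          have : (0:ℝ) ≤ (M:ℝ) ^ (3 * δ) * L ^ δ := by positivity
          nlinarith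
  · -- lower bound
    intro j₀ hj₀ r hr1 hr2
    have hr0 : (0:ℝ) < r := by linarith
    have hj₀' : j₀ ∈ CNF := by
      rw [cantorN_eq M A k N] at hj₀
      exact hj₀
    obtain ⟨a, haFk, hja⟩ := Finset.mem_image.mp hj₀'
    rw [hset ((j₀:ℝ) - r) ((j₀:ℝ) + r), Set.ncard_coe_finset]
    have h8pos : (0:ℝ) < 8 * (M:ℝ) ^ (3 * δ) := by positivity
    rcases lt_or_ge r (M:ℝ) with hrM | hrM
    · -- small radius: one point suffices
      have hmem : j₀ ∈ CNF.filter (fun x : ℤ => (j₀:ℝ) - r ≤ (x:ℝ) ∧ (x:ℝ) ≤ (j₀:ℝ) + r) := by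
        rw [Finset.mem_filter]
        exact ⟨hj₀', by constructor <;> linarith⟩
      have hcard : 1 ≤ (CNF.filter
          (fun x : ℤ => (j₀:ℝ) - r ≤ (x:ℝ) ∧ (x:ℝ) ≤ (j₀:ℝ) + r)).card :=
        Finset.card_pos.mpr ⟨j₀, hmem⟩
      have hcardR : (1:ℝ) ≤ ((CNF.filter
          (fun x : ℤ => (j₀:ℝ) - r ≤ (x:ℝ) ∧ (x:ℝ) ≤ (j₀:ℝ) + r)).card : ℝ) := by
        exact_mod_cast hcard
      have hbound : (2 * r) ^ δ ≤ 8 * (M:ℝ) ^ (3 * δ) := by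
        have hM2 : (2:ℝ) ≤ (M:ℝ) := by exact_mod_cast hM
        have hA1 : (M:ℝ) * 2 ≤ (M:ℝ) * (M:ℝ) := mul_le_mul_of_nonneg_left hM2 hMR0.le
        have hA2 : (M:ℝ) * ((M:ℝ) * 2) ≤ (M:ℝ) * ((M:ℝ) * (M:ℝ)) :=
          mul_le_mul_of_nonneg_left hA1 hMR0.le
        have h2r : 2 * r ≤ (M:ℝ) ^ (3:ℕ) := by nlinarith [sq_nonneg (M:ℝ)]
        calc (2 * r) ^ δ ≤ ((M:ℝ) ^ (3:ℕ)) ^ δ :=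
              Real.rpow_le_rpow (by linarith) h2r hδ0
          _ = (M:ℝ) ^ (3 * δ) := hM3δ.symm
          _ ≤ 8 * (M:ℝ) ^ (3 * δ) := by nlinarith [hM3δpos]
      calc (8 * (M:ℝ) ^ (3 * δ))⁻¹ * (2 * r) ^ δ
          ≤ (8 * (M:ℝ) ^ (3 * δ))⁻¹ * (8 * (M:ℝ) ^ (3 * δ)) := by
            apply mul_le_mul_of_nonneg_left hbound (by positivity)
        _ = 1 := inv_mul_cancel₀ (ne_of_gt h8pos)
        _ ≤ _ := hcardR
    · -- large radius
      set n : ℕ := ⌊r⌋₊ with hn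
      have hMn : M ≤ n := Nat.le_floor (by exact_mod_cast hrM)
      have hn2 : 2 ≤ n := le_trans hM hMn
      have hnr : (n:ℝ) ≤ r := Nat.floor_le hr0.le
      have hrn : r < (n:ℝ) + 1 := Nat.lt_floor_add_one r
      set s : ℕ := Nat.log M n with hs
      have hs1 : 1 ≤ s := by
        rw [hs]
        exact Nat.log_pos hM' hMn
      set m : ℕ := s - 1 with hmdef
      have hms : m + 1 = s := by omega
      have hpow1 : M ^ (m + 1) ≤ n := by
        rw [hms]
        exact Nat.pow_log_le_self M (by omega)
      have hpow1R : ((M:ℝ)) ^ (m + 1) ≤ r := by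
        calc ((M:ℝ)) ^ (m + 1) ≤ (n:ℝ) := by exact_mod_cast hpow1
          _ ≤ r := hnr
      have hpow2 : n < M ^ (m + 2) := by
        have : m + 2 = s + 1 := by omega
        rw [this]
        exact Nat.lt_pow_succ_log_self hM' n
      have hmk : m + 1 ≤ k := by
        have h1 : M ^ (m + 1) * 2 ≤ N := by
          have hR : ((M ^ (m + 1) * 2 : ℕ) : ℝ) ≤ (N:ℝ) := by
            push_cast
            calc ((M:ℝ)) ^ (m + 1) * 2 ≤ r * 2 := by nlinarith
              _ = 2 * r := by ring
              _ ≤ (N:ℝ) := hr2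
          exact_mod_cast hR
        have h2 : M ^ (m + 1) < M ^ (k + 1) := by
          have hMp : 0 < M ^ (m+1) := pow_pos (by omega : 0 < M) _
          omega
        have := (Nat.pow_lt_pow_iff_right hM').mp h2
        omega
      have hmltk : m < k := by omega
      -- the merge map
      set merge : (Fin m → ℕ) → (Fin k → ℕ) :=
        fun b i => if h : (i:ℕ) < m then b ⟨(i:ℕ), h⟩ else a i with hmerge
      have haA : ∀ j, a j ∈ A := by
        rw [hFk, Fintype.mem_piFinset] at haFk
        exact haFk
      set pim := Fintype.piFinset (fun _ : Fin m => A) with hpim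
      have hmergeFk : ∀ b ∈ pim, merge b ∈ Fk := by
        intro b hb
        rw [hFk, Fintype.mem_piFinset]
        intro i
        rw [hpim, Fintype.mem_piFinset] at hb
        by_cases h : (i:ℕ) < m
        · simp only [hmerge, dif_pos h]; exact hb _
        · simp only [hmerge, dif_neg h]; exact haA i
      have hdigm : ∀ b ∈ pim, ∀ j, merge b j < M := by
        intro b hb j
        have h1 := hmergeFk b hb
        rw [hFk, Fintype.mem_piFinset] at h1
        exact hAM _ (h1 j)
      -- distance bound on fval
      have hdist : ∀ b ∈ pim, (fval M k (merge b) : ℤ) - (fval M k a : ℤ) ≤ (M:ℤ) ^ m - 1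
          ∧ (fval M k a : ℤ) - (fval M k (merge b) : ℤ) ≤ (M:ℤ) ^ m - 1 := by
        intro b hb
        have hdig1 : ∀ j < k, extf k (merge b) j < M := by
          intro j hj
          simp only [extf, dif_pos hj]
          exact hdigm b hb _
        have hdig2 : ∀ j < k, extf k a j < M := by
          intro j hj
          simp only [extf, dif_pos hj]
          exact hAM _ (haA _)
        have hsplit1 : fval M k (merge b) = valN M (extf k (merge b)) m
            + M ^ m * valN M (fun j => extf k (merge b) (m + j)) (k - m) :=
          valN_split M _ hmltk.le
        have hsplit2 : fval M k a = valN M (extf k a) m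
            + M ^ m * valN M (fun j => extf k a (m + j)) (k - m) :=
          valN_split M _ hmltk.le
        have hhigh : valN M (fun j => extf k (merge b) (m + j)) (k - m)
            = valN M (fun j => extf k a (m + j)) (k - m) := by
          unfold valN
          apply Finset.sum_congr rfl
          intro j _
          congr 1
          simp only [extf]
          by_cases h : m + j < k
          · simp only [dif_pos h, hmerge]
            rw [dif_neg (by show ¬ m + j < m; omega)]
          · simp only [dif_neg h]
        have hlow1 : valN M (extf k (merge b)) m + 1 ≤ M ^ m :=
          valN_lt M _ m (fun j hj => hdig1 j (lt_of_lt_of_le hj hmltk.le)) hM1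
        have hlow2 : valN M (extf k a) m + 1 ≤ M ^ m :=
          valN_lt M _ m (fun j hj => hdig2 j (lt_of_lt_of_le hj hmltk.le)) hM1
        have hMZ : ((M ^ m : ℕ) : ℤ) = (M:ℤ) ^ m := by push_cast; ring
        constructor
        · rw [hsplit1, hsplit2]
          push_cast [hhigh]
          omega
        · rw [hsplit1, hsplit2]
          push_cast [hhigh]
          omega
      -- membership of images
      have hD0 : (0:ℤ) ≤ (M:ℤ) ^ m - 1 := by
        have : (1:ℤ) ≤ (M:ℤ) ^ m := one_le_pow₀ (by exact_mod_cast hM1)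
        omega
      have hdil : ∀ b ∈ pim, ((g (merge b) : ℤ):ℝ) ∈ Set.Icc ((j₀:ℝ) - r) ((j₀:ℝ) + r) := by
        intro b hb
        have h1 := fdil_dist hM1 hN₂.le hD0 (hdist b hb).1
        have h2 := fdil_dist hM1 hN₂.le hD0 (hdist b hb).2
        have hgj : g (merge b) - j₀ ≤ ((M:ℤ) ^ m - 1) * M ∧
            j₀ - g (merge b) ≤ ((M:ℤ) ^ m - 1) * M := by
          rw [← hja]
          exact ⟨h1, h2⟩
        have hbd : (((M:ℤ) ^ m - 1) * M : ℝ) ≤ r := by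
          push_cast
          have : ((M:ℝ) ^ m - 1) * M = (M:ℝ) ^ (m + 1) - M := by ring
          rw [this]
          have := hpow1R
          linarith
        have hg1 : ((g (merge b) : ℤ):ℝ) - (j₀:ℝ) ≤ (((M:ℤ) ^ m - 1) * M : ℝ) := by
          exact_mod_cast hgj.1
        have hg2 : (j₀:ℝ) - ((g (merge b) : ℤ):ℝ) ≤ (((M:ℤ) ^ m - 1) * M : ℝ) := by
          exact_mod_cast hgj.2
        constructor <;> linarith
      -- injectivity
      have hginj : Set.InjOn (fun b => g (merge b)) ↑pim := by
        intro b₁ hb₁ b₂ hb₂ heq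
        simp only [Finset.mem_coe] at hb₁ hb₂
        have hfv : fval M k (merge b₁) = fval M k (merge b₂) := by
          by_contra hne
          rcases Nat.lt_or_ge (fval M k (merge b₁)) (fval M k (merge b₂)) with h | h
          · have := fdil_mono hM1 hN₁ (by exact_mod_cast h :
              ((fval M k (merge b₁) : ℤ)) < (fval M k (merge b₂) : ℤ))
            rw [hg] at heq
            simp only at heq
            omega
          · have hlt : fval M k (merge b₂) < fval M k (merge b₁) := by omega
            have := fdil_mono hM1 hN₁ (by exact_mod_cast hlt :
              ((fval M k (merge b₂) : ℤ)) < (fval M k (merge b₁) : ℤ))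
            rw [hg] at heq
            simp only at heq
            omega
        have := fval_inj hM1 (hdigm b₁ hb₁) (hdigm b₂ hb₂) hfv
        funext i
        have hi : (i:ℕ) < m := i.2
        have hik : (i:ℕ) < k := lt_trans hi hmltk
        have := congrFun this ⟨(i:ℕ), hik⟩
        simp only [hmerge] at this
        rw [dif_pos (by simpa using hi), dif_pos (by simpa using hi)] at this
        simpa using this
      -- count
      have hcount : A.card ^ m ≤ (CNF.filter
          (fun x : ℤ => (j₀:ℝ) - r ≤ (x:ℝ) ∧ (x:ℝ) ≤ (j₀:ℝ) + r)).card := by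
        have hpimcard : pim.card = A.card ^ m := by
          rw [hpim, Fintype.card_piFinset]; simp
        rw [← hpimcard]
        apply Finset.card_le_card_of_injOn (fun b => g (merge b))
        · intro b hb
          rw [Finset.mem_coe, Finset.mem_filter]
          refine ⟨Finset.mem_image.mpr ⟨merge b, hmergeFk b hb, rfl⟩, ?_⟩
          have := hdil b hb
          rw [Set.mem_Icc] at this
          exact this
        · exact hginj
      have hcountR : ((A.card:ℝ)) ^ m ≤ ((CNF.filter
          (fun x : ℤ => (j₀:ℝ) - r ≤ (x:ℝ) ∧ (x:ℝ) ≤ (j₀:ℝ) + r)).card : ℝ) := by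
        exact_mod_cast hcount
      -- final rpow computation
      have hkey : (2 * r) ^ δ ≤ 8 * (M:ℝ) ^ (3 * δ) * (A.card:ℝ) ^ m := by
        have h2r : 2 * r ≤ 4 * (M:ℝ) ^ (m + 2) := by
          have h1 : (n:ℝ) < (M:ℝ) ^ (m + 2) := by exact_mod_cast hpow2
          have h2 : (1:ℝ) ≤ (n:ℝ) := by exact_mod_cast (by omega : 1 ≤ n)
          nlinarith
        have hrhs : 8 * (M:ℝ) ^ (3 * δ) * (A.card:ℝ) ^ m = 8 * ((M:ℝ) ^ (m + 3)) ^ δ := by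
          have e1 : ((M:ℝ) ^ (m + 3)) ^ δ = ((M:ℝ) ^ (3:ℕ)) ^ δ * ((M:ℝ) ^ m) ^ δ := by
            rw [← Real.mul_rpow (by positivity) (by positivity), ← pow_add, add_comm]
          rw [e1, hpowδ m, hM3δ]
          ring
        rw [hrhs]
        have hstep1 : (2 * r) ^ δ ≤ (4 * (M:ℝ) ^ (m + 2)) ^ δ :=
          Real.rpow_le_rpow (by linarith) h2r hδ0
        have hstep2 : (4 * (M:ℝ) ^ (m + 2)) ^ δ = (4:ℝ) ^ δ * ((M:ℝ) ^ (m + 2)) ^ δ :=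
          Real.mul_rpow (by norm_num) (by positivity)
        have hstep3 : (4:ℝ) ^ δ ≤ 4 := by
          calc (4:ℝ) ^ δ ≤ (4:ℝ) ^ (1:ℝ) :=
              Real.rpow_le_rpow_of_exponent_le (by norm_num) hδ1
            _ = 4 := Real.rpow_one 4
        have hstep4 : ((M:ℝ) ^ (m + 2)) ^ δ ≤ ((M:ℝ) ^ (m + 3)) ^ δ := by
          apply Real.rpow_le_rpow (by positivity) _ hδ0
          apply pow_le_pow_right₀ hMR.le
          omega
        have hpos : (0:ℝ) < ((M:ℝ) ^ (m + 2)) ^ δ := by positivity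
        have hpos3 : (0:ℝ) < ((M:ℝ) ^ (m + 3)) ^ δ := by positivity
        calc (2 * r) ^ δ ≤ (4:ℝ) ^ δ * ((M:ℝ) ^ (m + 2)) ^ δ := by rw [← hstep2]; exact hstep1
          _ ≤ 4 * ((M:ℝ) ^ (m + 3)) ^ δ := by
              have h4δ0 : (0:ℝ) ≤ (4:ℝ) ^ δ := by positivity
              nlinarith
          _ ≤ 8 * ((M:ℝ) ^ (m + 3)) ^ δ := by nlinarith
      calc (8 * (M:ℝ) ^ (3 * δ))⁻¹ * (2 * r) ^ δ
          ≤ (8 * (M:ℝ) ^ (3 * δ))⁻¹ * (8 * (M:ℝ) ^ (3 * δ) * (A.card:ℝ) ^ m) := by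
            apply mul_le_mul_of_nonneg_left hkey (by positivity)
        _ = (A.card:ℝ) ^ m := by
            rw [← mul_assoc, inv_mul_cancel₀ (ne_of_gt h8pos), one_mul]
        _ ≤ _ := hcountR
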